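/- Let a, b, d, θ, TD, TR, D, τᵢ be real numbers with a ≥ 0, b ≥ 0, τᵢ > 0, 0 ≤ D ≤ TD and TD + D < TR. Then the existence-condition sets of the nine states I, ID, IS, IDS, AS, ASD, AP, APcAS, AScI are pairwise mutually exclusive: no two distinct condition sets among them can hold simultaneously. -/
import Mathlib


/-- Existence conditions of the nine 2TR-periodic states of the biologically
relevant case `D ≤ TD`: `I, ID, IS, IDS, AS, ASD, AP, APcAS, AScI`
(indexed `0,…,8` in this order). -/
noncomputable def bioCond (a b d θ TD TR D τ : ℝ) : Fin 9 → Prop :=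
  fun i =>
    let Nm : ℝ := Real.exp (-(TR - TD - D) / τ)
    let Np : ℝ := Real.exp (-(TR - D) / τ)
    let Mm : ℝ := Real.exp (-(2 * TR - TD - D) / τ)
    let Mp : ℝ := Real.exp (-(2 * TR - D) / τ)
    let Rm : ℝ := Real.exp (-(TR - 2 * D) / τ)
    let P : ℝ := a - b + d
    match i with
    | ⟨0, _⟩ => d - b * Nm ≥ θ ∧ P ≥ θ                                   -- I
    | ⟨1, _⟩ => d - b * Nm < θ ∧ P ≥ θ                                   -- ID
    | ⟨2, _⟩ => d - b * Rm ≥ θ ∧ P < θ                                   -- IS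
    | ⟨3, _⟩ => d - b * Rm < θ ∧ a - b * Rm + d ≥ θ ∧ P < θ              -- IDS
    | ⟨4, _⟩ => a - b * Np + d < θ ∧ d - b * Mm ≥ θ                      -- AS
    | ⟨5, _⟩ => a - b * Np + d < θ ∧ d - b * Mm < θ ∧ a - b * Mm + d ≥ θ -- ASD
    | ⟨6, _⟩ => a - b * Mp + d < θ                                       -- AP
    | ⟨7, _⟩ => a - b * Mm + d < θ ∧ a - b * Mp + d ≥ θ                  -- APcAS
    | ⟨8, _⟩ => a - b * Rm + d < θ ∧ a - b * Np + d ≥ θ                  -- AScI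

set_option maxHeartbeats 1600000 in
/-- In the biologically relevant case `D ≤ TD`, `TD + D < TR`, the
existence-condition sets of the nine states `I, ID, IS, IDS, AS, ASD, AP,
APcAS, AScI` are pairwise mutually exclusive. -/
theorem bio_states_mutually_exclusive
    (a b d θ TD TR D τ : ℝ)
    (ha : 0 ≤ a) (hb : 0 ≤ b) (hτ : 0 < τ)
    (hD0 : 0 ≤ D) (hDTD : D ≤ TD) (hTDTR : TD + D < TR) :
    ∀ i j : Fin 9, i ≠ j →
      ¬(bioCond a b d θ TD TR D τ i ∧ bioCond a b d θ TD TR D τ j) := by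

  have key : ∀ x y : ℝ, x ≤ y → Real.exp (-y / τ) ≤ Real.exp (-x / τ) := by
    intro x y hxy
    exact Real.exp_le_exp.mpr ((div_le_div_iff_of_pos_right hτ).mpr (by linarith))
  have h1 : Real.exp (-(2 * TR - D) / τ) ≤ Real.exp (-(2 * TR - TD - D) / τ) :=
    key _ _ (by linarith)
  have h2 : Real.exp (-(2 * TR - TD - D) / τ) ≤ Real.exp (-(TR - D) / τ) :=
    key _ _ (by linarith)
  have h3 : Real.exp (-(TR - D) / τ) ≤ Real.exp (-(TR - 2 * D) / τ) :=
    key _ _ (by linarith)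
  have h4 : Real.exp (-(TR - 2 * D) / τ) ≤ Real.exp (-(TR - TD - D) / τ) :=
    key _ _ (by linarith)
  have h5 : Real.exp (-(TR - TD - D) / τ) ≤ 1 := by
    rw [Real.exp_le_one_iff]
    apply div_nonpos_of_nonpos_of_nonneg <;> linarith
  have b1 : b * Real.exp (-(2 * TR - D) / τ) ≤ b * Real.exp (-(2 * TR - TD - D) / τ) :=
    mul_le_mul_of_nonneg_left h1 hb
  have b2 : b * Real.exp (-(2 * TR - TD - D) / τ) ≤ b * Real.exp (-(TR - D) / τ) :=
    mul_le_mul_of_nonneg_left h2 hb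
  have b3 : b * Real.exp (-(TR - D) / τ) ≤ b * Real.exp (-(TR - 2 * D) / τ) :=
    mul_le_mul_of_nonneg_left h3 hb
  have b4 : b * Real.exp (-(TR - 2 * D) / τ) ≤ b * Real.exp (-(TR - TD - D) / τ) :=
    mul_le_mul_of_nonneg_left h4 hb
  have b5 : b * Real.exp (-(TR - TD - D) / τ) ≤ b := by
    nlinarith
  intro i j hij h
  obtain ⟨hi, hj⟩ := h
  fin_cases i <;> fin_cases j <;>
    first
      | exact absurd rfl hij
      | (simp only [bioCond] at hi hj; casesm* _ ∧ _ <;> linarith)
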